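/- For a graph G and integer t ≥ 1, G is a CM_t graph if and only if G is unmixed and for every vertex v of G, the induced subgraph G \ N[v] is a CM_{t-1} graph. -/

import Mathlib

set_option synthInstance.maxHeartbeats 1000000
set_option maxHeartbeats 1000000
open Classical
noncomputable section

/-- A (abstract) simplicial complex on vertex type `V`: a downward-closed
set of finite sets containing the empty set when nonempty is not required;
we only require downward closure. -/
def IsComplex {V : Type} (Δ : Set (Finset V)) : Prop :=
  ∀ F ∈ Δ, ∀ G : Finset V, G ⊆ F → G ∈ Δ

/-- `F` is a facet (maximal face) of `Δ`. -/
def IsFacet {V : Type} (Δ : Set (Finset V)) (F : Finset V) : Prop :=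
  F ∈ Δ ∧ ∀ G ∈ Δ, F ⊆ G → F = G

/-- A complex is pure if all facets have the same cardinality. -/
def IsPure {V : Type} (Δ : Set (Finset V)) : Prop :=
  ∀ F G : Finset V, IsFacet Δ F → IsFacet Δ G → F.card = G.card

/-- `Δ` has dimension `d - 1` iff the largest cardinality of a face is `d`. -/
def HasDimCard {V : Type} [Fintype V] (Δ : Set (Finset V)) (d : ℕ) : Prop :=
  (∃ F ∈ Δ, F.card = d) ∧ ∀ F ∈ Δ, F.card ≤ d

/-- The link of a face `F` in `Δ`. -/
def linkC {V : Type} (Δ : Set (Finset V)) (F : Finset V) : Set (Finset V) :=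
  { G | Disjoint G F ∧ G ∪ F ∈ Δ }

/-- The Stanley-Reisner ideal of `Δ` over `k`: generated by the monomials
supported on the non-faces of `Δ`. -/
def SRIdeal (k : Type) [Field k] {V : Type} [Fintype V] (Δ : Set (Finset V)) :
    Ideal (MvPolynomial V k) :=
  Ideal.span { m | ∃ F : Finset V, F ∉ Δ ∧ m = ∏ v ∈ F, MvPolynomial.X v }

/-- The Stanley-Reisner ring `k[Δ]`. -/
abbrev SRRing (k : Type) [Field k] {V : Type} [Fintype V] (Δ : Set (Finset V)) :=
  MvPolynomial V k ⧸ SRIdeal k Δ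

/-- `Δ` is Cohen-Macaulay over `k` iff its Stanley-Reisner ring admits a
regular sequence, contained in the irrelevant maximal ideal, whose length is
the Krull dimension of the ring (i.e. depth = dimension). -/
def IsCM (k : Type) [Field k] {V : Type} [Fintype V] (Δ : Set (Finset V)) : Prop :=
  ∃ rs : List (SRRing k Δ),
    (∀ r ∈ rs, r ∈ Ideal.span
      (Set.range fun v : V => Ideal.Quotient.mk (SRIdeal k Δ) (MvPolynomial.X v))) ∧
    RingTheory.Sequence.IsRegular (SRRing k Δ) rs ∧
    (rs.length : WithBot (WithTop ℕ)) = ringKrullDim (SRRing k Δ)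

/-- `Δ` is `CM_t` over `k`: pure, and the link of every face of cardinality
at least `t` is Cohen-Macaulay over `k`. -/
def IsCMt (k : Type) [Field k] {V : Type} [Fintype V] (Δ : Set (Finset V)) (t : ℕ) : Prop :=
  IsPure Δ ∧ ∀ F ∈ Δ, t ≤ F.card → IsCM k (linkC Δ F)

/-- The independence complex of a graph. -/
def indC {V : Type} (G : SimpleGraph V) : Set (Finset V) :=
  { F | ∀ u ∈ F, ∀ v ∈ F, ¬ G.Adj u v }

/-- A graph is unmixed if its independence complex is pure. -/
def Unmixed {V : Type} (G : SimpleGraph V) : Prop := IsPure (indC G)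

/-- The closed neighborhood `N[v]` of a vertex. -/
def closedNbhd {V : Type} (G : SimpleGraph V) (v : V) : Set V :=
  insert v (G.neighborSet v)

/-- The induced subgraph `G \ N[v]` on the complement of the closed
neighborhood of `v`. -/
def delNbhd {V : Type} (G : SimpleGraph V) (v : V) :
    SimpleGraph ((closedNbhd G v)ᶜ : Set V) :=
  SimpleGraph.induce _ G

/-- A pure order of a bipartite graph `G`, given by labelings
`x y : Fin n → V` of the two parts. -/
def IsPureOrder {V : Type} (G : SimpleGraph V) {n : ℕ} (x y : Fin n → V) : Prop :=
  Function.Bijective (Sum.elim x y) ∧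
  (∀ i j : Fin n, ¬ G.Adj (x i) (x j)) ∧
  (∀ i j : Fin n, ¬ G.Adj (y i) (y j)) ∧
  (∀ i : Fin n, G.Adj (x i) (y i)) ∧
  (∀ i j k : Fin n, i ≠ j → j ≠ k → i ≠ k →
    G.Adj (x i) (y j) → G.Adj (x j) (y k) → G.Adj (x i) (y k))

noncomputable instance fintypeOfSetCompl {V : Type} [Fintype V] (s : Set V) : Fintype s :=
  s.toFinite.fintype

/-- The join of two simplicial complexes on disjoint vertex sets. -/
def joinC {V W : Type} (Δ : Set (Finset V)) (Δ' : Set (Finset W)) :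
    Set (Finset (V ⊕ W)) :=
  { F | ∃ A ∈ Δ, ∃ B ∈ Δ',
      F = A.map ⟨Sum.inl, Sum.inl_injective⟩ ∪ B.map ⟨Sum.inr, Sum.inr_injective⟩ }

end

section AuxLemmas
open MvPolynomial Classical

noncomputable section

namespace CMaux

/-- Image of a complex under an injection of vertex types. -/
def mapC {V W : Type} (ι : W ↪ V) (Δ' : Set (Finset W)) : Set (Finset V) :=
  {A | ∃ B ∈ Δ', A = B.map ι}

variable (k : Type) [Field k] {V W : Type} [Fintype V] [Fintype W]

def gfun (ι : W ↪ V) : V → MvPolynomial W k :=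
  fun u => if h : ∃ w, ι w = u then X h.choose else 0

lemma gfun_apply (ι : W ↪ V) (w : W) : gfun k ι (ι w) = X w := by
  have h : ∃ w', ι w' = ι w := ⟨w, rfl⟩
  rw [gfun, dif_pos h]
  exact congrArg X (ι.injective h.choose_spec)

lemma gfun_not_mem (ι : W ↪ V) {v : V} (hv : v ∉ Set.range ι) : gfun k ι v = 0 := by
  rw [gfun, dif_neg]
  rintro ⟨w, hw⟩; exact hv ⟨w, hw⟩

lemma singleton_not_mem_mapC (ι : W ↪ V) (Δ' : Set (Finset W)) {v : V}
    (hv : v ∉ Set.range ι) : ({v} : Finset V) ∉ mapC ι Δ' := by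
  rintro ⟨B, _, hBe⟩
  have hvmem : v ∈ ({v} : Finset V) := Finset.mem_singleton_self v
  rw [hBe] at hvmem
  obtain ⟨w, _, hw⟩ := Finset.mem_map.mp hvmem
  exact hv ⟨w, hw⟩

lemma X_mem_SRIdeal {Δ : Set (Finset V)} {v : V} (hv : ({v} : Finset V) ∉ Δ) :
    (X v : MvPolynomial V k) ∈ SRIdeal k Δ :=
  Ideal.subset_span ⟨{v}, hv, by simp⟩

lemma aeval_gfun_mem (ι : W ↪ V) (Δ' : Set (Finset W)) :
    ∀ a ∈ SRIdeal k (mapC ι Δ'), aeval (gfun k ι) a ∈ SRIdeal k Δ' := by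
  classical
  intro a ha
  have hle : SRIdeal k (mapC ι Δ') ≤
      Ideal.comap (aeval (gfun k ι) : MvPolynomial V k →ₐ[k] MvPolynomial W k).toRingHom
        (SRIdeal k Δ') := by
    rw [SRIdeal, Ideal.span_le]
    rintro m ⟨F, hF, rfl⟩
    simp only [Set.mem_setOf_eq, SetLike.mem_coe, Ideal.mem_comap, AlgHom.toRingHom_eq_coe,
      RingHom.coe_coe, map_prod, aeval_X]
    by_cases hsub : ↑F ⊆ Set.range ι
    · set F' := F.preimage ι ι.injective.injOn with hF'def
      have himg : F'.map ι = F := by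
        rw [Finset.map_eq_image, hF'def, Finset.image_preimage]
        exact Finset.filter_true_of_mem fun x hx => hsub hx
      have hF'n : F' ∉ Δ' := fun h => hF ⟨F', h, himg.symm⟩
      rw [← himg, Finset.prod_map]
      exact Ideal.subset_span ⟨F', hF'n,
        Finset.prod_congr rfl fun w _ => gfun_apply k ι w⟩
    · obtain ⟨x, hxF, hxr⟩ := Set.not_subset.mp hsub
      rw [Finset.prod_eq_zero (Finset.mem_coe.mp hxF) (gfun_not_mem k ι hxr)]
      exact Ideal.zero_mem _
  exact hle ha

lemma rename_mem (ι : W ↪ V) (Δ' : Set (Finset W)) :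
    ∀ a ∈ SRIdeal k Δ', rename ι a ∈ SRIdeal k (mapC ι Δ') := by
  intro a ha
  have hle : SRIdeal k Δ' ≤
      Ideal.comap (rename ι : MvPolynomial W k →ₐ[k] MvPolynomial V k).toRingHom
        (SRIdeal k (mapC ι Δ')) := by
    rw [SRIdeal, Ideal.span_le]
    rintro m ⟨F', hF', rfl⟩
    simp only [Set.mem_setOf_eq, SetLike.mem_coe, Ideal.mem_comap, AlgHom.toRingHom_eq_coe,
      RingHom.coe_coe, map_prod, rename_X]
    have hFn : F'.map ι ∉ mapC ι Δ' := by
      rintro ⟨B, hB, hBe⟩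
      exact hF' ((Finset.map_injective ι hBe) ▸ hB)
    exact Ideal.subset_span ⟨F'.map ι, hFn, (Finset.prod_map F' ι (fun v => X v)).symm⟩
  exact hle ha

def f1 (ι : W ↪ V) (Δ' : Set (Finset W)) : SRRing k (mapC ι Δ') →+* SRRing k Δ' :=
  Ideal.Quotient.lift _
    ((Ideal.Quotient.mk (SRIdeal k Δ')).comp
      (aeval (gfun k ι) : MvPolynomial V k →ₐ[k] MvPolynomial W k).toRingHom)
    (fun a ha => by
      simp only [RingHom.comp_apply, AlgHom.toRingHom_eq_coe, RingHom.coe_coe]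
      exact Ideal.Quotient.eq_zero_iff_mem.mpr (aeval_gfun_mem k ι Δ' a ha))

def f2 (ι : W ↪ V) (Δ' : Set (Finset W)) : SRRing k Δ' →+* SRRing k (mapC ι Δ') :=
  Ideal.Quotient.lift _
    ((Ideal.Quotient.mk (SRIdeal k (mapC ι Δ'))).comp
      (rename ι : MvPolynomial W k →ₐ[k] MvPolynomial V k).toRingHom)
    (fun a ha => by
      simp only [RingHom.comp_apply, AlgHom.toRingHom_eq_coe, RingHom.coe_coe]
      exact Ideal.Quotient.eq_zero_iff_mem.mpr (rename_mem k ι Δ' a ha))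

lemma f1_mk (ι : W ↪ V) (Δ' : Set (Finset W)) (p : MvPolynomial V k) :
    f1 k ι Δ' (Ideal.Quotient.mk _ p) = Ideal.Quotient.mk _ (aeval (gfun k ι) p) := by
  simp [f1]

lemma f2_mk (ι : W ↪ V) (Δ' : Set (Finset W)) (p : MvPolynomial W k) :
    f2 k ι Δ' (Ideal.Quotient.mk _ p) = Ideal.Quotient.mk _ (rename ι p) := by
  simp [f2]

def eRing (ι : W ↪ V) (Δ' : Set (Finset W)) : SRRing k (mapC ι Δ') ≃+* SRRing k Δ' :=
  RingEquiv.ofRingHom (f1 k ι Δ') (f2 k ι Δ')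
    (by
      apply Ideal.Quotient.ringHom_ext
      apply MvPolynomial.ringHom_ext
      · intro a
        simp [f1_mk, f2_mk, MvPolynomial.algebraMap_eq]
      · intro w
        simp [f1_mk, f2_mk, gfun_apply])
    (by
      apply Ideal.Quotient.ringHom_ext
      apply MvPolynomial.ringHom_ext
      · intro a
        simp [f1_mk, f2_mk, MvPolynomial.algebraMap_eq]
      · intro v
        by_cases h : v ∈ Set.range ι
        · obtain ⟨w, rfl⟩ := h
          simp [f1_mk, f2_mk, gfun_apply]
        · have h0 : (Ideal.Quotient.mk (SRIdeal k (mapC ι Δ')) (X v)) = 0 :=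
            Ideal.Quotient.eq_zero_iff_mem.mpr
              (X_mem_SRIdeal k (singleton_not_mem_mapC ι Δ' h))
          simp [f1_mk, f2_mk, gfun_not_mem k ι h, h0])

lemma eRing_mk_X (ι : W ↪ V) (Δ' : Set (Finset W)) (w : W) :
    eRing k ι Δ' (Ideal.Quotient.mk _ (X (ι w))) = Ideal.Quotient.mk _ (X w) := by
  have h : ∀ x, eRing k ι Δ' x = f1 k ι Δ' x := fun _ => rfl
  rw [h, f1_mk, aeval_X, gfun_apply]

lemma eRing_mk_X_zero (ι : W ↪ V) (Δ' : Set (Finset W)) {v : V} (hv : v ∉ Set.range ι) :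
    eRing k ι Δ' (Ideal.Quotient.mk _ (X v)) = 0 := by
  have h : ∀ x, eRing k ι Δ' x = f1 k ι Δ' x := fun _ => rfl
  rw [h, f1_mk, aeval_X, gfun_not_mem k ι hv, map_zero]

lemma eRing_symm_mk_X (ι : W ↪ V) (Δ' : Set (Finset W)) (w : W) :
    (eRing k ι Δ').symm (Ideal.Quotient.mk _ (X w)) = Ideal.Quotient.mk _ (X (ι w)) := by
  have h : ∀ x, (eRing k ι Δ').symm x = f2 k ι Δ' x := fun _ => rfl
  rw [h, f2_mk, rename_X]

lemma isCM_of_ringEquiv {Δ : Set (Finset V)} {Δ' : Set (Finset W)}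
    (e : SRRing k Δ ≃+* SRRing k Δ')
    (he : ∀ v : V, e (Ideal.Quotient.mk _ (X v)) ∈
      Ideal.span (Set.range fun w : W => Ideal.Quotient.mk (SRIdeal k Δ') (X w)))
    (hCM : IsCM k Δ) : IsCM k Δ' := by
  obtain ⟨rs, hmem, hreg, hlen⟩ := hCM
  refine ⟨rs.map e, ?_, ?_, ?_⟩
  · intro r hr
    obtain ⟨r₀, hr₀, rfl⟩ := List.mem_map.mp hr
    have h1 : e r₀ ∈ Ideal.map (e : SRRing k Δ →+* SRRing k Δ')
        (Ideal.span (Set.range fun v : V => Ideal.Quotient.mk (SRIdeal k Δ) (X v))) :=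
      Ideal.mem_map_of_mem _ (hmem r₀ hr₀)
    refine Ideal.map_le_iff_le_comap.mpr ?_ h1
    rw [Ideal.span_le]
    rintro x ⟨v, rfl⟩
    exact he v
  · refine (AddEquiv.isRegular_congr (e := e.toAddEquiv) ?_).mp hreg
    exact List.forall₂_map_right_iff.mpr (List.forall₂_same.mpr fun r _ x => by
      simp [smul_eq_mul, map_mul])
  · rw [List.length_map, hlen]
    exact ringKrullDim_eq_of_ringEquiv e

lemma isCM_mapC_iff (ι : W ↪ V) (Δ' : Set (Finset W)) :
    IsCM k (mapC ι Δ') ↔ IsCM k Δ' := by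
  constructor
  · apply isCM_of_ringEquiv k (eRing k ι Δ')
    intro v
    by_cases h : v ∈ Set.range ι
    · obtain ⟨w, rfl⟩ := h
      rw [eRing_mk_X]
      exact Ideal.subset_span ⟨w, rfl⟩
    · rw [eRing_mk_X_zero k ι Δ' h]
      exact Ideal.zero_mem _
  · apply isCM_of_ringEquiv k (eRing k ι Δ').symm
    intro w
    rw [eRing_symm_mk_X]
    exact Ideal.subset_span ⟨ι w, rfl⟩

end CMaux

section Comb

lemma exists_facet {V : Type} [Fintype V] {Δ : Set (Finset V)} {F : Finset V} (hF : F ∈ Δ) :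
    ∃ K, IsFacet Δ K ∧ F ⊆ K := by
  classical
  obtain ⟨K, ⟨hK, hFK⟩, hmax⟩ :=
    Set.Finite.exists_maximalFor Finset.card {K | K ∈ Δ ∧ F ⊆ K} (Set.toFinite _)
      ⟨F, hF, subset_rfl⟩
  refine ⟨K, ⟨hK, fun G hG hKG => ?_⟩, hFK⟩
  have hc := hmax (j := G) ⟨hG, hFK.trans hKG⟩ (Finset.card_le_card hKG)
  exact Finset.eq_of_subset_of_card_le hKG hc

lemma isPure_linkC {V : Type} [Fintype V] {Δ : Set (Finset V)} (hP : IsPure Δ)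
    {F : Finset V} : IsPure (linkC Δ F) := by
  have key : ∀ H, IsFacet (linkC Δ F) H → ∃ K, IsFacet Δ K ∧ H.card + F.card = K.card := by
    rintro H ⟨⟨hdisj, hmem⟩, hmax⟩
    obtain ⟨K, hK, hsub⟩ := exists_facet hmem
    have hFK : F ⊆ K := Finset.subset_union_right.trans hsub
    have hKF : K \ F ∈ linkC Δ F :=
      ⟨Finset.sdiff_disjoint, by rw [Finset.sdiff_union_of_subset hFK]; exact hK.1⟩
    have hHsub : H ⊆ K \ F :=
      Finset.subset_sdiff.mpr ⟨Finset.subset_union_left.trans hsub, hdisj⟩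
    have hEq : H = K \ F := hmax _ hKF hHsub
    refine ⟨K, hK, ?_⟩
    rw [hEq, Finset.card_sdiff_of_subset hFK]
    exact Nat.sub_add_cancel (Finset.card_le_card hFK)
  intro H1 H2 h1 h2
  obtain ⟨K1, hK1, e1⟩ := key H1 h1
  obtain ⟨K2, hK2, e2⟩ := key H2 h2
  have := hP K1 K2 hK1 hK2
  omega

lemma isPure_of_mapC {V W : Type} (ι : W ↪ V) {Δ' : Set (Finset W)}
    (h : IsPure (CMaux.mapC ι Δ')) : IsPure Δ' := by
  intro B1 B2 h1 h2
  have f : ∀ B, IsFacet Δ' B → IsFacet (CMaux.mapC ι Δ') (B.map ι) := by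
    rintro B ⟨hB, hmax⟩
    refine ⟨⟨B, hB, rfl⟩, ?_⟩
    rintro G ⟨B₂, hB₂, rfl⟩ hsub
    rw [Finset.map_subset_map] at hsub
    rw [hmax B₂ hB₂ hsub]
  have := h _ _ (f B1 h1) (f B2 h2)
  simpa using this

lemma linkC_empty {V : Type} (Δ : Set (Finset V)) : linkC Δ ∅ = Δ := by
  ext A; simp [linkC]

lemma mem_compl_closedNbhd {V : Type} (G : SimpleGraph V) (v u : V) :
    u ∈ (closedNbhd G v)ᶜ ↔ u ≠ v ∧ ¬ G.Adj v u := by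
  simp [closedNbhd, not_or]

/-- The canonical embedding of the complement of a closed neighborhood. -/
def cne {V : Type} (G : SimpleGraph V) (v : V) : ↥((closedNbhd G v)ᶜ) ↪ V :=
  ⟨Subtype.val, Subtype.val_injective⟩

lemma link_eq {V : Type} (G : SimpleGraph V) (v : V)
    (F' : Finset ↥((closedNbhd G v)ᶜ)) (hF' : F' ∈ indC (delNbhd G v)) :
    linkC (indC G) (insert v (F'.map (cne G v))) =
      CMaux.mapC (cne G v) (linkC (indC (delNbhd G v)) F') := by
  haveI : DecidablePred (· ∈ (closedNbhd G v)ᶜ) := fun _ => Classical.dec _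
  letI : DecidableEq ↥((closedNbhd G v)ᶜ) := fun a b => propDecidable (a = b)
  ext A
  constructor
  · rintro ⟨hdisj, hmem⟩
    have hAcompl : ∀ a ∈ A, a ∈ (closedNbhd G v)ᶜ := by
      intro a ha
      rw [mem_compl_closedNbhd]
      constructor
      · rintro rfl
        exact Finset.disjoint_left.mp hdisj ha (Finset.mem_insert_self _ _)
      · intro hadj
        exact hmem v (Finset.mem_union_right _ (Finset.mem_insert_self _ _))
          a (Finset.mem_union_left _ ha) hadj
    set B : Finset ↥((closedNbhd G v)ᶜ) := A.subtype (· ∈ (closedNbhd G v)ᶜ) with hBdef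
    have hemb : Function.Embedding.subtype (· ∈ (closedNbhd G v)ᶜ) = cne G v := by
      ext x; rfl
    have hBmap : B.map (cne G v) = A := by
      rw [hBdef, ← hemb, Finset.subtype_map]
      exact Finset.filter_true_of_mem hAcompl
    have hmemB : ∀ b : ↥((closedNbhd G v)ᶜ), b ∈ B ↔ (b : V) ∈ A := by
      intro b; simp [hBdef]
    refine ⟨B, ⟨?_, ?_⟩, hBmap.symm⟩
    · rw [Finset.disjoint_left]
      intro b hb hb'
      refine Finset.disjoint_left.mp hdisj ((hmemB b).mp hb) ?_
      refine Finset.mem_insert_of_mem ?_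
      exact Finset.mem_map_of_mem _ hb'
    · intro u hu w hw hadj
      have hadj' : G.Adj (u : V) (w : V) := hadj
      have hcoe : ∀ x : ↥((closedNbhd G v)ᶜ), (x ∈ B ∨ x ∈ F') →
          (x : V) ∈ A ∪ insert v (F'.map (cne G v)) := by
        intro x hx
        rcases hx with hx | hx
        · exact Finset.mem_union_left _ ((hmemB x).mp hx)
        · exact Finset.mem_union_right _
            (Finset.mem_insert_of_mem (Finset.mem_map_of_mem _ hx))
      exact hmem _ (hcoe u (Finset.mem_union.mp hu)) _ (hcoe w (Finset.mem_union.mp hw)) hadj'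
  · rintro ⟨B, ⟨hdisj', hmem'⟩, rfl⟩
    have hBc : ∀ b : ↥((closedNbhd G v)ᶜ), (b : V) ∈ (closedNbhd G v)ᶜ := fun b => b.2
    constructor
    · rw [Finset.disjoint_left]
      rintro x hx hx'
      obtain ⟨b, hb, rfl⟩ := Finset.mem_map.mp hx
      rcases Finset.mem_insert.mp hx' with h | h
      · exact ((mem_compl_closedNbhd G v _).mp (hBc b)).1 h
      · obtain ⟨f, hf, hfe⟩ := Finset.mem_map.mp h
        have : f = b := Subtype.val_injective hfe
        exact Finset.disjoint_left.mp hdisj' hb (this ▸ hf)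
    · intro u hu w hw hadj
      have hcase : ∀ x : V, x ∈ B.map (cne G v) ∪ insert v (F'.map (cne G v)) →
          x = v ∨ ∃ c : ↥((closedNbhd G v)ᶜ), (c ∈ B ∨ c ∈ F') ∧ x = (c : V) := by
        intro x hx
        rcases Finset.mem_union.mp hx with h | h
        · obtain ⟨b, hb, rfl⟩ := Finset.mem_map.mp h
          exact Or.inr ⟨b, Or.inl hb, rfl⟩
        · rcases Finset.mem_insert.mp h with h | h
          · exact Or.inl h
          · obtain ⟨f, hf, rfl⟩ := Finset.mem_map.mp h
            exact Or.inr ⟨f, Or.inr hf, rfl⟩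
      rcases hcase u hu with hu' | ⟨c, hc, hu'⟩
      · rcases hcase w hw with hw' | ⟨d, hd, hw'⟩
        · rw [hu', hw'] at hadj; exact G.loopless.irrefl _ hadj
        · rw [hu', hw'] at hadj
          exact ((mem_compl_closedNbhd G v _).mp (hBc d)).2 hadj
      · rcases hcase w hw with hw' | ⟨d, hd, hw'⟩
        · rw [hu', hw'] at hadj
          exact ((mem_compl_closedNbhd G v _).mp (hBc c)).2 hadj.symm
        · rw [hu', hw'] at hadj
          exact hmem' c (Finset.mem_union.mpr hc) d (Finset.mem_union.mpr hd) hadj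

lemma empty_mem_indC {V : Type} (G : SimpleGraph V) : (∅ : Finset V) ∈ indC G := by
  intro u hu; simp at hu

lemma indC_delNbhd_eq {V : Type} (G : SimpleGraph V) (v : V) :
    CMaux.mapC (cne G v) (indC (delNbhd G v)) = linkC (indC G) {v} := by
  have h := link_eq G v ∅ (empty_mem_indC _)
  simpa [linkC_empty] using h.symm

lemma insert_mem_indC {V : Type} (G : SimpleGraph V) (v : V)
    (F' : Finset ↥((closedNbhd G v)ᶜ)) (hF' : F' ∈ indC (delNbhd G v)) :
    insert v (F'.map (cne G v)) ∈ indC G := by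
  intro u hu w hw hadj
  have hc : ∀ x : V, x ∈ insert v (F'.map (cne G v)) →
      x = v ∨ ∃ c, c ∈ F' ∧ x = (c : V) := by
    intro x hx
    rcases Finset.mem_insert.mp hx with h | h
    · exact Or.inl h
    · obtain ⟨f, hf, rfl⟩ := Finset.mem_map.mp h
      exact Or.inr ⟨f, hf, rfl⟩
  rcases hc u hu with hu' | ⟨c, hc', hu'⟩
  · rcases hc w hw with hw' | ⟨d, hd', hw'⟩
    · rw [hu', hw'] at hadj; exact G.loopless.irrefl _ hadj
    · rw [hu', hw'] at hadj
      exact ((mem_compl_closedNbhd G v _).mp d.2).2 hadj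
  · rcases hc w hw with hw' | ⟨d, hd', hw'⟩
    · rw [hu', hw'] at hadj
      exact ((mem_compl_closedNbhd G v _).mp c.2).2 hadj.symm
    · rw [hu', hw'] at hadj
      exact hF' c hc' d hd' hadj

end Comb

end
end AuxLemmas

/-- A graph is `CM_t` (`t ≥ 1`) iff it is unmixed and `G \ N[v]` is `CM_{t-1}` for
every vertex `v`. -/
theorem graph_isCMt_iff (k : Type) [Field k] {V : Type} [Fintype V]
    (G : SimpleGraph V) (t : ℕ) (ht : 1 ≤ t) :
    IsCMt k (indC G) t ↔
      (Unmixed G ∧ ∀ v : V, IsCMt k (indC (delNbhd G v)) (t - 1)) := by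
  constructor
  · rintro ⟨hpure, hlinks⟩
    refine ⟨hpure, fun v => ⟨?_, ?_⟩⟩
    · refine isPure_of_mapC (cne G v) ?_
      rw [indC_delNbhd_eq]
      exact isPure_linkC hpure
    · intro F' hF' hcard
      have hv : v ∉ F'.map (cne G v) := by
        intro h
        obtain ⟨b, _, hb⟩ := Finset.mem_map.mp h
        have hb2 := b.2
        have hbv : (b : V) = v := hb
        rw [hbv] at hb2
        exact hb2 (Set.mem_insert _ _)
      have hins : insert v (F'.map (cne G v)) ∈ indC G := insert_mem_indC G v F' hF'
      have hcard2 : t ≤ (insert v (F'.map (cne G v))).card := by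
        rw [Finset.card_insert_of_notMem hv, Finset.card_map]
        omega
      have h := hlinks _ hins hcard2
      rw [link_eq G v F' hF'] at h
      exact (CMaux.isCM_mapC_iff k (cne G v) _).mp h
  · rintro ⟨hun, hdel⟩
    refine ⟨hun, fun F hF hcard => ?_⟩
    have hpos : 0 < F.card := lt_of_lt_of_le ht hcard
    obtain ⟨v, hv⟩ := Finset.card_pos.mp hpos
    haveI : DecidablePred (· ∈ (closedNbhd G v)ᶜ) := fun _ => Classical.dec _
    set F' : Finset ↥((closedNbhd G v)ᶜ) := (F.erase v).subtype (· ∈ (closedNbhd G v)ᶜ)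
      with hF'def
    have herase : ∀ u ∈ F.erase v, u ∈ (closedNbhd G v)ᶜ := by
      intro u hu
      rw [mem_compl_closedNbhd]
      exact ⟨Finset.ne_of_mem_erase hu, fun h => hF v hv u (Finset.mem_of_mem_erase hu) h⟩
    have hemb : Function.Embedding.subtype (· ∈ (closedNbhd G v)ᶜ) = cne G v := by
      ext x; rfl
    have hmapF : F'.map (cne G v) = F.erase v := by
      rw [hF'def, ← hemb, Finset.subtype_map]
      exact Finset.filter_true_of_mem herase
    have hF'mem : F' ∈ indC (delNbhd G v) := by
      intro u hu w hw hadj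
      have hu' : (u : V) ∈ F.erase v := by
        rw [← hmapF]; exact Finset.mem_map_of_mem _ hu
      have hw' : (w : V) ∈ F.erase v := by
        rw [← hmapF]; exact Finset.mem_map_of_mem _ hw
      exact hF _ (Finset.mem_of_mem_erase hu') _ (Finset.mem_of_mem_erase hw') hadj
    have hins : insert v (F'.map (cne G v)) = F := by
      rw [hmapF, Finset.insert_erase hv]
    have hcard' : t - 1 ≤ F'.card := by
      have h1 : F'.card = (F.erase v).card := by rw [← hmapF, Finset.card_map]
      have h2 : (F.erase v).card = F.card - 1 := Finset.card_erase_of_mem hv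
      omega
    have h := (hdel v).2 F' hF'mem hcard'
    have h2 := (CMaux.isCM_mapC_iff k (cne G v) _).mpr h
    rw [← link_eq G v F' hF'mem] at h2
    rw [← hins]
    exact h2
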